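/- arXiv:2106.06382 — 2 statements merged into one kernel-verified Lean document; each statement's English description precedes it below -/
import Mathlib

section
/- Let Γ be a group acting by homeomorphisms on topological spaces Y and X, with X Hausdorff, and let β : Y → X be a continuous Γ-equivariant map. Fix y ∈ Y and set x := β(y). Define Λ := {g ∈ Γ : y ∈ closure(β⁻¹(interior(X^g)))}, where X^g := {z ∈ X : g·z = z}. Then Γ_x⁰ ⊆ Λ ⊆ Γ_x. -/
/-- Proposition 5.1 (the inclusions `Γ_x⁰ ≤ Λ ≤ Γ_x`): for a continuous
equivariant map `β : Y → X` with `X` Hausdorff, `y ∈ Y`, `x = β y`, and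
`Λ = {g : y ∈ closure (β⁻¹(interior Xᵍ))}`, one has `Γ_x⁰ ⊆ Λ ⊆ Γ_x`. -/
theorem stmt6 {Γ Y X : Type*} [Group Γ]
    [TopologicalSpace Y] [TopologicalSpace X] [T2Space X]
    [MulAction Γ Y] [MulAction Γ X]
    [ContinuousConstSMul Γ Y] [ContinuousConstSMul Γ X]
    (β : Y → X) (hβ : Continuous β)
    (hequiv : ∀ (g : Γ) (y : Y), β (g • y) = g • β y) (y : Y) :
    (∀ g : Γ, β y ∈ interior {z : X | g • z = z} →
      y ∈ closure (β ⁻¹' interior {z : X | g • z = z})) ∧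
    (∀ g : Γ, y ∈ closure (β ⁻¹' interior {z : X | g • z = z}) →
      g • β y = β y) := by
  constructor
  · intro g hg
    exact subset_closure hg
  · intro g hy
    have hclosed : IsClosed {w : Y | g • β w = β w} :=
      isClosed_eq ((continuous_const_smul g).comp hβ) hβ
    have hsub : β ⁻¹' interior {z : X | g • z = z} ⊆ {w : Y | g • β w = β w} := by
      intro w hw
      exact (interior_subset (s := {z : X | g • z = z}) hw : g • β w = β w)
    exact hclosed.closure_subset_iff.mpr hsub hy
end

section
/- Let X be a discrete space, K a compact Hausdorff space, ι : X → OnePoint X the canonical embedding into the one-point compactification, η : X × K → β(X × K) the canonical map into the Stone–Čech compactification, and φ : β(X × K) → OnePoint X the unique continuous map with φ(η(x,k)) = ι x for all (x,k). Then for every y ∈ β(X × K) and x ∈ X with φ(y) = ι x, there exists k ∈ K such that y = η(x,k); equivalently, φ⁻¹(ι(X)) = η(X × K). -/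
/-- Theorem 3.9, the claim `φ⁻¹(X) = X × K`: for discrete `X` and compact
Hausdorff `K`, any point of `β(X × K)` mapping into `X ⊆ OnePoint X` under the
canonical map `φ` lies in the image of `X × K`. -/
theorem stmt9 {X K : Type*} [TopologicalSpace X] [DiscreteTopology X]
    [TopologicalSpace K] [CompactSpace K] [T2Space K]
    (φ : StoneCech (X × K) → OnePoint X) (hφ : Continuous φ)
    (hext : ∀ (x : X) (k : K), φ (stoneCechUnit (x, k)) = (x : OnePoint X)) :
    (∀ (y : StoneCech (X × K)) (x : X), φ y = (x : OnePoint X) →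
      ∃ k : K, y = stoneCechUnit (x, k)) ∧
    φ ⁻¹' (Set.range fun x : X => (x : OnePoint X)) =
      Set.range (stoneCechUnit : X × K → StoneCech (X × K)) := by
  have main : ∀ (y : StoneCech (X × K)) (x : X), φ y = (x : OnePoint X) →
      ∃ k : K, y = stoneCechUnit (x, k) := by
    intro y x hy
    by_contra h
    push_neg at h
    -- the fiber {x} × K in the Stone–Čech compactification
    have hc : Continuous fun k : K => stoneCechUnit (x, k) :=
      continuous_stoneCechUnit.comp (Continuous.prodMk_right x)
    have hCcl : IsClosed (Set.range fun k : K => stoneCechUnit (x, k)) :=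
      (isCompact_range hc).isClosed
    have hsing : IsOpen {(x : OnePoint X)} := by
      have : ({(x : OnePoint X)} : Set (OnePoint X)) = (↑) '' {x} := by simp
      rw [this]
      exact OnePoint.isOpenEmbedding_coe.isOpenMap _ (isOpen_discrete _)
    set U : Set (StoneCech (X × K)) :=
      φ ⁻¹' {(x : OnePoint X)} \ Set.range fun k : K => stoneCechUnit (x, k) with hU
    have hUopen : IsOpen U := (hsing.preimage hφ).sdiff hCcl
    have hUne : U.Nonempty := ⟨y, hy, by
      rintro ⟨k, hk⟩
      exact h k hk.symm⟩
    obtain ⟨⟨x', k⟩, hp⟩ := denseRange_stoneCechUnit.exists_mem_open hUopen hUne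
    obtain ⟨hp1, hp2⟩ := hp
    have hx' : (x' : OnePoint X) = (x : OnePoint X) := by
      simpa [hext] using hp1
    have : x' = x := OnePoint.coe_injective hx'
    exact hp2 ⟨k, by rw [this]⟩
  refine ⟨main, ?_⟩
  ext y
  constructor
  · rintro ⟨x, hx⟩
    obtain ⟨k, hk⟩ := main y x hx.symm
    exact ⟨(x, k), hk.symm⟩
  · rintro ⟨⟨x, k⟩, rfl⟩
    exact ⟨x, (hext x k).symm⟩
end
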